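/- Let E be a real Banach space, H a real Hilbert space, and A ⊆ E an open set. Let F : E × H → H be a map which is infinitely Fréchet differentiable (C^∞) on A × H and such that for every a ∈ A the map w ↦ F(a, w) is linear. Then: (1) for every a ∈ A the map F(a, ·) is a bounded linear operator on H, so the curried map Cur F : A → L(H), a ↦ F(a, ·), is well defined; (2) Cur F is C^∞ from A into the Banach space L(H) of bounded linear operators on H equipped with the operator norm; (3) its differential is the curryfication of the partial differential of F in its first argument: for a ∈ A and b ∈ E, d(Cur F)(a)(b) is the bounded operator w ↦ (∂_a F)(a, w)(b). -/

import Mathlib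

open scoped Topology
open Filter Topology


theorem aux_linear_eq_fderiv {H : Type*} [NormedAddCommGroup H] [NormedSpace ℝ H]
    {H' : Type*} [NormedAddCommGroup H'] [NormedSpace ℝ H']
    {f : H → H'} (hf : IsLinearMap ℝ f) {L : H →L[ℝ] H'}
    (hL : HasFDerivAt f L 0) (w : H) : f w = L w := by
  have hc : Tendsto (fun n : ℕ => ‖(n : ℝ)‖) atTop atTop := by
    simp only [Real.norm_natCast]
    exact tendsto_natCast_atTop_atTop
  have hlim := hL.lim w hc
  have heq : ∀ᶠ n : ℕ in atTop, (n : ℝ) • (f (0 + ((n : ℝ))⁻¹ • w) - f 0) = f w := by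
    filter_upwards [eventually_ge_atTop 1] with n hn
    have hn0 : (n : ℝ) ≠ 0 := by positivity
    rw [zero_add, hf.map_smul, hf.map_zero, sub_zero, smul_inv_smul₀ hn0]
  have := hlim.congr' heq
  exact (tendsto_nhds_unique this tendsto_const_nhds).symm

set_option maxHeartbeats 1000000 in
theorem stmt13
    {E : Type*} [NormedAddCommGroup E] [NormedSpace ℝ E] [CompleteSpace E]
    {H : Type*} [NormedAddCommGroup H] [InnerProductSpace ℝ H] [CompleteSpace H]
    (A : Set E) (hA : IsOpen A) (F : E × H → H)
    (hF : ContDiffOn ℝ (⊤ : ℕ∞) F (A ×ˢ (Set.univ : Set H)))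
    (hlin : ∀ a ∈ A, IsLinearMap ℝ (fun w : H => F (a, w))) :
    ∃ Φ : E → (H →L[ℝ] H),
      (∀ a ∈ A, ∀ w : H, Φ a w = F (a, w)) ∧
      ContDiffOn ℝ (⊤ : ℕ∞) Φ A ∧
      ∀ a ∈ A, ∀ b : E, ∀ w : H,
        (fderiv ℝ Φ a b) w = fderiv ℝ F (a, w) (b, 0) := by
  classical
  have hs : IsOpen (A ×ˢ (Set.univ : Set H)) := hA.prod isOpen_univ
  have hmem : ∀ a ∈ A, ∀ w : H, (a, w) ∈ A ×ˢ (Set.univ : Set H) :=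
    fun a ha w => ⟨ha, trivial⟩
  have hFd : ∀ a ∈ A, ∀ w : H, DifferentiableAt ℝ F (a, w) := fun a ha w =>
    (hF.differentiableOn (by simp)).differentiableAt
      (hs.mem_nhds (hmem a ha w))
  have hG : ContDiffOn ℝ (⊤ : ℕ∞) (fderiv ℝ F) (A ×ˢ (Set.univ : Set H)) :=
    hF.fderiv_of_isOpen hs (by exact_mod_cast le_top)
  have hGd : ∀ a ∈ A, ∀ w : H, DifferentiableAt ℝ (fderiv ℝ F) (a, w) := fun a ha w =>
    (hG.differentiableOn (by simp)).differentiableAt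
      (hs.mem_nhds (hmem a ha w))
  -- partial derivative in the H direction
  have hpw : ∀ a ∈ A, ∀ w : H, HasFDerivAt (fun w' : H => F (a, w'))
      ((fderiv ℝ F (a, w)).comp ((0 : H →L[ℝ] E).prod (ContinuousLinearMap.id ℝ H))) w :=
    fun a ha w => ((hFd a ha w).hasFDerivAt).comp w
      (HasFDerivAt.prodMk (hasFDerivAt_const a w) (hasFDerivAt_id w))
  -- partial derivative in the E direction
  have hpa : ∀ a ∈ A, ∀ w : H, HasFDerivAt (fun a' : E => F (a', w))
      ((fderiv ℝ F (a, w)).comp ((ContinuousLinearMap.id ℝ E).prod (0 : E →L[ℝ] H))) a :=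
    fun a ha w => ((hFd a ha w).hasFDerivAt).comp a
      (HasFDerivAt.prodMk (hasFDerivAt_id a) (hasFDerivAt_const w a))
  set pre : ((E × H) →L[ℝ] H) →L[ℝ] (H →L[ℝ] H) :=
    (ContinuousLinearMap.compL ℝ H (E × H) H).flip (ContinuousLinearMap.inr ℝ E H) with hpre
  have hpre_apply : ∀ g : (E × H) →L[ℝ] H, ∀ w : H, pre g w = g (0, w) := by
    intro g w; simp [hpre]
  refine ⟨fun a => pre (fderiv ℝ F (a, 0)), ?_, ?_, ?_⟩
  · -- Φ a w = F (a, w)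
    intro a ha w
    have := aux_linear_eq_fderiv (hlin a ha) (hpw a ha 0) w
    rw [hpre_apply]
    simpa using this.symm
  · -- smoothness
    have hι : ContDiff ℝ (⊤ : ℕ∞) (fun a : E => (a, (0 : H))) :=
      ContDiff.prodMk contDiff_id contDiff_const
    have h1 : ContDiffOn ℝ (⊤ : ℕ∞) (fun a : E => fderiv ℝ F (a, 0)) A :=
      hG.comp hι.contDiffOn (fun a ha => hmem a ha 0)
    exact pre.contDiff.comp_contDiffOn h1
  · intro a ha b w
    -- Step A: compute fderiv of Φ at a
    have hι' : HasFDerivAt (fun a : E => (a, (0 : H)))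
        ((ContinuousLinearMap.id ℝ E).prod (0 : E →L[ℝ] H)) a :=
      HasFDerivAt.prodMk (hasFDerivAt_id a) (hasFDerivAt_const (0 : H) a)
    have hinner : HasFDerivAt (fun a : E => fderiv ℝ F (a, 0))
        ((fderiv ℝ (fderiv ℝ F) (a, 0)).comp
          ((ContinuousLinearMap.id ℝ E).prod (0 : E →L[ℝ] H))) a :=
      HasFDerivAt.comp (g := fderiv ℝ F) a (hGd a ha 0).hasFDerivAt hι'
    have hΦd0 : HasFDerivAt (⇑pre ∘ fun a : E => fderiv ℝ F (a, 0))
        (pre.comp ((fderiv ℝ (fderiv ℝ F) (a, 0)).comp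
          ((ContinuousLinearMap.id ℝ E).prod (0 : E →L[ℝ] H)))) a :=
      HasFDerivAt.comp (g := ⇑pre) a pre.hasFDerivAt hinner
    have hΦd : HasFDerivAt (fun a => pre (fderiv ℝ F (a, 0)))
        (pre.comp ((fderiv ℝ (fderiv ℝ F) (a, 0)).comp
          ((ContinuousLinearMap.id ℝ E).prod (0 : E →L[ℝ] H)))) a := hΦd0
    have hstepA : (fderiv ℝ (fun a => pre (fderiv ℝ F (a, 0))) a b) w
        = fderiv ℝ (fderiv ℝ F) (a, 0) (b, 0) (0, w) := by
      rw [hΦd.fderiv]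
      simp [hpre_apply]
    -- Step B: symmetry of the second derivative
    have hsym : IsSymmSndFDerivAt ℝ F (a, 0) :=
      (hF.contDiffAt (hs.mem_nhds (hmem a ha 0))).isSymmSndFDerivAt
        (by rw [minSmoothness_of_isRCLikeNormedField]; exact WithTop.coe_le_coe.mpr le_top)
    -- Step C: ψ w := fderiv F (a,w) (b,0) is linear in w and differentiable at 0
    have hψlin : IsLinearMap ℝ (fun w : H => fderiv ℝ F (a, w) (b, 0)) := by
      constructor
      · intro w₁ w₂
        have heq : (fun a' : E => F (a', w₁ + w₂))
            =ᶠ[𝓝 a] fun a' => F (a', w₁) + F (a', w₂) := by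
          filter_upwards [hA.mem_nhds ha] with a' ha'
          exact (hlin a' ha').map_add w₁ w₂
        have hsum := ((hpa a ha w₁).add (hpa a ha w₂)).congr_of_eventuallyEq heq
        have := (hpa a ha (w₁ + w₂)).unique hsum
        have happ := congrArg (fun L => L b) this
        simpa using happ
      · intro c w'
        have heq : (fun a' : E => F (a', c • w'))
            =ᶠ[𝓝 a] fun a' => c • F (a', w') := by
          filter_upwards [hA.mem_nhds ha] with a' ha'
          exact (hlin a' ha').map_smul c w'
        have hsmul := ((hpa a ha w').const_smul c).congr_of_eventuallyEq heq
        have := (hpa a ha (c • w')).unique hsmul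
        have happ := congrArg (fun L => L b) this
        simpa using happ
    have hκ : HasFDerivAt (fun w : H => (a, w))
        ((0 : H →L[ℝ] E).prod (ContinuousLinearMap.id ℝ H)) 0 :=
      HasFDerivAt.prodMk (hasFDerivAt_const a 0) (hasFDerivAt_id 0)
    have hκin : HasFDerivAt (fun w : H => fderiv ℝ F (a, w))
        ((fderiv ℝ (fderiv ℝ F) (a, 0)).comp
          ((0 : H →L[ℝ] E).prod (ContinuousLinearMap.id ℝ H))) 0 :=
      HasFDerivAt.comp (g := fderiv ℝ F) 0 (hGd a ha 0).hasFDerivAt hκ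
    have hψd0 : HasFDerivAt
        (⇑(ContinuousLinearMap.apply ℝ H ((b, 0) : E × H)) ∘ fun w : H => fderiv ℝ F (a, w))
        ((ContinuousLinearMap.apply ℝ H ((b, 0) : E × H)).comp
          ((fderiv ℝ (fderiv ℝ F) (a, 0)).comp
            ((0 : H →L[ℝ] E).prod (ContinuousLinearMap.id ℝ H)))) 0 :=
      HasFDerivAt.comp (g := ⇑(ContinuousLinearMap.apply ℝ H ((b, 0) : E × H))) 0
        (ContinuousLinearMap.apply ℝ H ((b, 0) : E × H)).hasFDerivAt hκin
    have hψd : HasFDerivAt (fun w : H => fderiv ℝ F (a, w) (b, 0))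
        ((ContinuousLinearMap.apply ℝ H ((b, 0) : E × H)).comp
          ((fderiv ℝ (fderiv ℝ F) (a, 0)).comp
            ((0 : H →L[ℝ] E).prod (ContinuousLinearMap.id ℝ H)))) 0 := hψd0
    have hstepC := aux_linear_eq_fderiv hψlin hψd w
    rw [hstepA, hsym (b, 0) (0, w)]
    simpa using hstepC.symm
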